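/- Let S, T be self-adjoint positive semi-definite trace-class operators on a separable Hilbert space H with S ⪰ T (i.e., S − T is positive semi-definite). Then Tr((T^{1/2} S T^{1/2})^{1/2}) ≥ Tr(T). -/

import Mathlib

open scoped RealInnerProductSpace

open ContinuousLinearMap in
lemma sqrtMonoAux {H : Type*} [NormedAddCommGroup H] [InnerProductSpace ℝ H] [CompleteSpace H]
    (A B : H →L[ℝ] H)
    (hAsa : ∀ x y : H, ⟪A x, y⟫ = ⟪x, A y⟫)
    (hApos : ∀ x : H, 0 ≤ ⟪x, A x⟫)
    (hBsa : ∀ x y : H, ⟪B x, y⟫ = ⟪x, B y⟫)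
    (hBpos : ∀ x : H, 0 ≤ ⟪x, B x⟫)
    (hsq : ∀ x : H, ‖B x‖ ≤ ‖A x‖) (x : H) :
    ⟪x, B x⟫ ≤ ⟪x, A x⟫ := by
  rcases eq_or_ne x 0 with rfl | hx0
  · simp
  have hxn : (0:ℝ) < ‖x‖ := norm_pos_iff.mpr hx0
  have hxpos : (0:ℝ) < ‖x‖ ^ 2 := by positivity
  suffices key : ∀ ε : ℝ, 0 < ε → ⟪x, B x⟫ ≤ ⟪x, A x⟫ + ε * ‖x‖ ^ 2 by
    refine le_of_forall_pos_le_add fun δ hδ => ?_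
    have h := key (δ / ‖x‖ ^ 2) (by positivity)
    rw [div_mul_cancel₀ _ (ne_of_gt hxpos)] at h
    exact h
  intro ε hε
  set A' : H →L[ℝ] H := A + ε • (1 : H →L[ℝ] H) with hA'def
  have hA'app : ∀ z, A' z = A z + ε • z := by intro z; simp [hA'def]
  have hA'sa : ∀ u v : H, ⟪A' u, v⟫ = ⟪u, A' v⟫ := by
    intro u v
    simp [hA'app, inner_add_left, inner_add_right, real_inner_smul_left,
      real_inner_smul_right, hAsa]
  have hA'sym : ∀ u v : H, ⟪u, A' v⟫ = ⟪v, A' u⟫ := by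
    intro u v; rw [← hA'sa, real_inner_comm]
  have hA'pos : ∀ z, ε * ‖z‖ ^ 2 ≤ ⟪z, A' z⟫ := by
    intro z
    rw [hA'app, inner_add_right, real_inner_smul_right, real_inner_self_eq_norm_sq]
    linarith [hApos z]
  -- norm comparison with A'
  have hBA' : ∀ z, ‖B z‖ ≤ ‖A' z‖ := by
    intro z
    have hcross : 0 ≤ ⟪A z, z⟫ := by rw [real_inner_comm]; exact hApos z
    have h1 : ‖A' z‖ ^ 2 = ‖A z‖ ^ 2 + 2 * (ε * ⟪A z, z⟫) + ε ^ 2 * ‖z‖ ^ 2 := by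
      rw [hA'app, @norm_add_sq_real, real_inner_smul_right, norm_smul]
      simp [abs_of_pos hε, mul_pow]
    have h2 : ‖B z‖ ^ 2 ≤ ‖A' z‖ ^ 2 := by
      have := hsq z
      nlinarith [norm_nonneg (B z), norm_nonneg (A z)]
    have := Real.sqrt_le_sqrt h2
    rwa [Real.sqrt_sq (norm_nonneg _), Real.sqrt_sq (norm_nonneg _)] at this
  -- A' is invertible
  have hunit : IsUnit A' := by
    refine isUnit_of_forall_le_norm_inner_map A' (c := ⟨ε, hε.le⟩) (by exact_mod_cast hε) ?_
    intro z
    have h1 : ε * ‖z‖ ^ 2 ≤ ⟪A' z, z⟫ := by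
      rw [real_inner_comm]; exact hA'pos z
    have h2 : ⟪A' z, z⟫ ≤ ‖(⟪A' z, z⟫ : ℝ)‖ := by
      rw [Real.norm_eq_abs]; exact le_abs_self _
    have hgoal : ‖z‖ ^ 2 * ε ≤ ‖(⟪A' z, z⟫ : ℝ)‖ := by nlinarith [h1, h2]
    exact_mod_cast hgoal
  obtain ⟨u, hu⟩ := hunit
  set J : H →L[ℝ] H := ↑u⁻¹ with hJdef
  have hA'J : ∀ z, A' (J z) = z := by
    intro z
    have : ((u : H →L[ℝ] H) * J) z = (1 : H →L[ℝ] H) z := by rw [hJdef, u.mul_inv]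
    rwa [ContinuousLinearMap.mul_apply, hu, ContinuousLinearMap.one_apply] at this
  have hBJ : ∀ y, ‖B (J y)‖ ≤ ‖y‖ := fun y => (hBA' _).trans_eq (by rw [hA'J])
  set N : H →L[ℝ] H := J ∘L B with hNdef
  have hNapp : ∀ z, N z = J (B z) := fun z => rfl
  have hA'N : ∀ z, A' (N z) = B z := by intro z; rw [hNapp, hA'J]
  have hadj : ∀ p q : H, ⟪p, A' (N q)⟫ = ⟪N p, A' q⟫ := by
    intro p q
    rw [hA'N, ← hA'sa, hA'N, hBsa]
  have hadjpow : ∀ (k : ℕ) (p q : H), ⟪p, A' ((N ^ k) q)⟫ = ⟪(N ^ k) p, A' q⟫ := by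
    intro k
    induction k with
    | zero => intro p q; simp
    | succ k ih =>
      intro p q
      have h1 : (N ^ (k+1)) q = (N ^ k) (N q) := by rw [pow_succ, ContinuousLinearMap.mul_apply]
      have h2 : (N ^ (k+1)) p = N ((N ^ k) p) := by rw [pow_succ', ContinuousLinearMap.mul_apply]
      rw [h1, ih, hadj, h2]
  -- Cauchy-Schwarz for the A'-form
  have hcs : ∀ p q : H, ⟪p, A' q⟫ ^ 2 ≤ ⟪p, A' p⟫ * ⟪q, A' q⟫ := by
    intro p q
    have hquad : ∀ t : ℝ, 0 ≤ ⟪q, A' q⟫ * (t * t) + (2 * ⟪p, A' q⟫) * t + ⟪p, A' p⟫ := by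
      intro t
      have h0 : 0 ≤ ⟪p + t • q, A' (p + t • q)⟫ :=
        le_trans (by positivity) (hA'pos (p + t • q))
      have hexp : ⟪p + t • q, A' (p + t • q)⟫
          = ⟪q, A' q⟫ * (t * t) + (2 * ⟪p, A' q⟫) * t + ⟪p, A' p⟫ := by
        rw [map_add, map_smul, inner_add_left, inner_add_right, inner_add_right,
          real_inner_smul_left, real_inner_smul_right, real_inner_smul_left,
          real_inner_smul_right, hA'sym q p]
        ring
      linarith [hexp ▸ h0]
    have hd := discrim_le_zero hquad
    rw [discrim] at hd
    nlinarith [hd]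
  set a : ℝ := ⟪x, A' x⟫ with hadef
  set K : ℝ := ‖x‖ * ‖B x‖ with hKdef
  set Q : ℕ → ℝ := fun n => ⟪x, A' ((N ^ (2 ^ n)) x)⟫ with hQdef
  have hsplit : ∀ n : ℕ, (2:ℕ) ^ (n+1) = 2 ^ n + 2 ^ n := by
    intro n; rw [pow_succ, mul_two]
  have hQsucc : ∀ n, Q (n+1) = ⟪(N ^ (2 ^ n)) x, A' ((N ^ (2 ^ n)) x)⟫ := by
    intro n
    show ⟪x, A' ((N ^ (2 ^ (n+1))) x)⟫ = _
    rw [hsplit, pow_add, ContinuousLinearMap.mul_apply, hadjpow]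
  have hQ0 : Q 0 = ⟪x, B x⟫ := by
    show ⟪x, A' ((N ^ (2 ^ 0)) x)⟫ = _
    rw [pow_zero, pow_one, hA'N]
  have hQnonneg : ∀ n, 0 ≤ Q n := by
    intro n
    cases n with
    | zero => rw [hQ0]; exact hBpos x
    | succ m => rw [hQsucc]; exact le_trans (by positivity) (hA'pos _)
  have hQcs : ∀ n, Q n ^ 2 ≤ a * Q (n+1) := by
    intro n
    rw [hQsucc]
    exact hcs x ((N ^ (2 ^ n)) x)
  have hBNpow : ∀ k : ℕ, ‖B ((N ^ k) x)‖ ≤ ‖B x‖ := by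
    intro k
    induction k with
    | zero => simp
    | succ k ih =>
      have h1 : (N ^ (k+1)) x = N ((N ^ k) x) := by rw [pow_succ', ContinuousLinearMap.mul_apply]
      rw [h1, hNapp]
      exact le_trans (hBJ _) ih
  have hQbound : ∀ n, Q n ≤ K := by
    intro n
    have h1 : (2:ℕ) ^ n = (2 ^ n - 1) + 1 := by
      have := Nat.one_le_two_pow (n := n); omega
    show ⟪x, A' ((N ^ (2 ^ n)) x)⟫ ≤ K
    rw [h1]
    have h2 : (N ^ ((2 ^ n - 1) + 1)) x = N ((N ^ (2 ^ n - 1)) x) := by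
      rw [pow_succ', ContinuousLinearMap.mul_apply]
    rw [h2, hA'N]
    calc ⟪x, B ((N ^ (2 ^ n - 1)) x)⟫ ≤ ‖x‖ * ‖B ((N ^ (2 ^ n - 1)) x)‖ :=
          real_inner_le_norm _ _
      _ ≤ K := by
          rw [hKdef]
          exact mul_le_mul_of_nonneg_left (hBNpow _) (norm_nonneg x)
  have ha0 : 0 ≤ a := le_trans (by positivity) (hA'pos x)
  have hmain : ∀ n, Q 0 ^ (2 ^ n) ≤ a ^ (2 ^ n - 1) * Q n := by
    intro n
    induction n with
    | zero => simp
    | succ n ih =>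
      have hone : 1 ≤ (2:ℕ) ^ n := Nat.one_le_two_pow
      have h2 : Q 0 ^ (2 ^ (n+1)) = (Q 0 ^ (2 ^ n)) ^ 2 := by
        rw [← pow_mul, pow_succ]
      have h3 : (Q 0 ^ (2 ^ n)) ^ 2 ≤ (a ^ (2 ^ n - 1) * Q n) ^ 2 :=
        pow_le_pow_left₀ (pow_nonneg (hQ0 ▸ hBpos x) _) ih 2
      have h4 : (a ^ (2 ^ n - 1) * Q n) ^ 2
          = a ^ (2 ^ n - 1) * a ^ (2 ^ n - 1) * Q n ^ 2 := by ring
      have h5 : a ^ (2 ^ n - 1) * a ^ (2 ^ n - 1) * Q n ^ 2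
          ≤ a ^ (2 ^ n - 1) * a ^ (2 ^ n - 1) * (a * Q (n+1)) := by
        have := hQcs n
        have hnn : 0 ≤ a ^ (2 ^ n - 1) * a ^ (2 ^ n - 1) := by positivity
        exact mul_le_mul_of_nonneg_left this hnn
      have he : (2 ^ n - 1) + (2 ^ n - 1) + 1 = 2 ^ (n+1) - 1 := by
        have := hsplit n; omega
      have h6 : a ^ (2 ^ n - 1) * a ^ (2 ^ n - 1) * (a * Q (n+1))
          = a ^ (2 ^ (n+1) - 1) * Q (n+1) := by
        rw [← pow_add, ← mul_assoc, ← pow_succ, he]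
      calc Q 0 ^ (2 ^ (n+1)) = (Q 0 ^ (2 ^ n)) ^ 2 := h2
        _ ≤ (a ^ (2 ^ n - 1) * Q n) ^ 2 := h3
        _ = a ^ (2 ^ n - 1) * a ^ (2 ^ n - 1) * Q n ^ 2 := h4
        _ ≤ a ^ (2 ^ n - 1) * a ^ (2 ^ n - 1) * (a * Q (n+1)) := h5
        _ = a ^ (2 ^ (n+1) - 1) * Q (n+1) := h6
  have hmainK : ∀ n, Q 0 ^ (2 ^ n) ≤ a ^ (2 ^ n - 1) * K := fun n =>
    le_trans (hmain n) (mul_le_mul_of_nonneg_left (hQbound n) (pow_nonneg ha0 _))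
  -- conclusion
  have haeq : a = ⟪x, A x⟫ + ε * ‖x‖ ^ 2 := by
    rw [hadef, hA'app, inner_add_right, real_inner_smul_right, real_inner_self_eq_norm_sq]
  rw [← haeq, ← hQ0]
  by_contra hcon
  push_neg at hcon
  have hapos : 0 < a := lt_of_lt_of_le (by positivity) (hA'pos x)
  have hr : 1 < Q 0 / a := (one_lt_div hapos).mpr hcon
  have h1 : ∀ n, (Q 0 / a) ^ (2 ^ n) ≤ K / a := by
    intro n
    rw [div_pow, div_le_div_iff₀ (pow_pos hapos _) hapos]
    calc Q 0 ^ (2 ^ n) * a ≤ (a ^ (2 ^ n - 1) * K) * a :=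
          mul_le_mul_of_nonneg_right (hmainK n) hapos.le
      _ = K * a ^ (2 ^ n) := by
          have he : (2 ^ n - 1) + 1 = 2 ^ n := by
            have := Nat.one_le_two_pow (n := n); omega
          rw [mul_right_comm, ← pow_succ, he, mul_comm]
  have h2 : ∀ n : ℕ, (Q 0 / a) ^ n ≤ K / a := fun n =>
    le_trans (pow_le_pow_right₀ hr.le (Nat.le_of_lt (Nat.lt_two_pow_self (n := n)))) (h1 n)
  obtain ⟨n, hn⟩ := pow_unbounded_of_one_lt (K / a) hr
  exact absurd (h2 n) (not_le.mpr hn)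

/-- Let `S, T` be self-adjoint positive semi-definite trace-class
operators on a separable real Hilbert space with `S ⪰ T`. Let `R = T^{1/2}` be the
principal square root of `T` and `C = (R S R)^{1/2}` the principal square root of
`T^{1/2} S T^{1/2}`. Then `Tr(C) ≥ Tr(T)`. -/
theorem trace_sqrt_sandwich_ge_trace
    {H : Type*} [NormedAddCommGroup H] [InnerProductSpace ℝ H] [CompleteSpace H]
    (e : HilbertBasis ℕ ℝ H)
    (S T R C : H →L[ℝ] H)
    (hSsa : ∀ x y : H, ⟪S x, y⟫ = ⟪x, S y⟫)
    (hTsa : ∀ x y : H, ⟪T x, y⟫ = ⟪x, T y⟫)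
    (hSpos : ∀ x : H, 0 ≤ ⟪x, S x⟫)
    (hTpos : ∀ x : H, 0 ≤ ⟪x, T x⟫)
    (hST : ∀ x : H, ⟪x, T x⟫ ≤ ⟪x, S x⟫)
    (hStc : Summable fun i => ⟪e i, S (e i)⟫)
    (hTtc : Summable fun i => ⟪e i, T (e i)⟫)
    (hRsa : ∀ x y : H, ⟪R x, y⟫ = ⟪x, R y⟫)
    (hRpos : ∀ x : H, 0 ≤ ⟪x, R x⟫)
    (hR2 : R ∘L R = T)
    (hCsa : ∀ x y : H, ⟪C x, y⟫ = ⟪x, C y⟫)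
    (hCpos : ∀ x : H, 0 ≤ ⟪x, C x⟫)
    (hC2 : C ∘L C = R ∘L S ∘L R)
    (hCtc : Summable fun i => ⟪e i, C (e i)⟫) :
    ∑' i, ⟪e i, T (e i)⟫ ≤ ∑' i, ⟪e i, C (e i)⟫ := by
  have hTz : ∀ z, T z = R (R z) := by
    intro z; rw [← hR2]; rfl
  have hC2z : ∀ z, C (C z) = R (S (R z)) := by
    intro z
    have : (C ∘L C) z = (R ∘L S ∘L R) z := by rw [hC2]
    simpa using this
  have hnorm : ∀ z, ‖T z‖ ≤ ‖C z‖ := by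
    intro z
    have h1 : ‖T z‖ ^ 2 ≤ ‖C z‖ ^ 2 := by
      have e1 : ‖T z‖ ^ 2 = ⟪R z, T (R z)⟫ := by
        rw [← real_inner_self_eq_norm_sq, hTz z, hRsa, ← hTz]
      have e2 : ‖C z‖ ^ 2 = ⟪R z, S (R z)⟫ := by
        rw [← real_inner_self_eq_norm_sq, hCsa, hC2z, ← hRsa]
      rw [e1, e2]
      exact hST (R z)
    have := Real.sqrt_le_sqrt h1
    rwa [Real.sqrt_sq (norm_nonneg _), Real.sqrt_sq (norm_nonneg _)] at this
  have hpt : ∀ z, ⟪z, T z⟫ ≤ ⟪z, C z⟫ :=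
    sqrtMonoAux C T hCsa hCpos hTsa hTpos hnorm
  exact Summable.tsum_le_tsum (fun i => hpt (e i)) hTtc hCtc
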